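/- For the Markov chain on {0,…,n} where from state i one moves to i+1 with probability (n−i)/(n+1) and absorbs with probability (i+1)/(n+1), the expected number of transitions before absorption, starting from state 0, is at most C·√n for some absolute constant C (e.g., C can be taken so the bound is asymptotically (√(πn))/4 up to lower order terms). -/
import Mathlib


open Finset

private lemma abel_sum_aux (f : ℕ → ℝ) (N : ℕ) :
    ∑ j ∈ Finset.Icc 1 N, (j : ℝ) * (f (j - 1) - f j)
      = (∑ k ∈ Finset.range N, f k) - N * f N := by
  induction N with
  | zero => simp
  | succ N ih =>
    rw [Finset.sum_Icc_succ_top (by omega), ih, Finset.sum_range_succ]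
    simp only [Nat.add_sub_cancel]
    push_cast
    ring

/-- For the absorbing chain on `{0, …, n}` with `p_{i,i+1} = (n-i)/(n+1)` and
`p_{i,n} = (i+1)/(n+1)`, the expected number of transitions until absorption,
`Σ_{j=1}^n j · P_j` with `P_j = (j/(n+1)) ∏_{i=0}^{j-2} (n-i)/(n+1)`, is at most
`C · √n` for an absolute constant `C > 0`. -/
theorem expected_absorption_le_sqrt :
    ∃ C > 0, ∀ n : ℕ, 1 ≤ n →
      ∑ j ∈ Finset.Icc 1 n, (j : ℝ) *
          (((j : ℝ) / ((n : ℝ) + 1)) *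
            ∏ i ∈ Finset.range (j - 1), ((n : ℝ) - (i : ℝ)) / ((n : ℝ) + 1)) ≤
        C * Real.sqrt n := by
  refine ⟨4, by norm_num, fun n hn => ?_⟩
  have hn1 : (0:ℝ) < (n : ℝ) + 1 := by positivity
  set f : ℕ → ℝ := fun i => ((n : ℝ) - (i : ℝ)) / ((n : ℝ) + 1) with hf
  set Q : ℕ → ℝ := fun j => ∏ i ∈ Finset.range j, f i with hQdef
  set K : ℕ := Nat.sqrt n with hKdef
  have hKn : K ≤ n := Nat.sqrt_le_self n
  have hfnn : ∀ i : ℕ, i ≤ n → 0 ≤ f i := by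
    intro i hi
    apply div_nonneg _ hn1.le
    have : (i : ℝ) ≤ n := by exact_mod_cast hi
    linarith
  have hfle : ∀ i : ℕ, f i ≤ 1 := by
    intro i
    rw [div_le_one hn1]
    have : (0:ℝ) ≤ (i : ℝ) := Nat.cast_nonneg i
    linarith
  have hQnn : ∀ j : ℕ, j ≤ n → 0 ≤ Q j := by
    intro j hj
    exact Finset.prod_nonneg fun i hi => hfnn i (le_trans (Finset.mem_range.1 hi).le hj)
  have hQ1 : ∀ j : ℕ, j ≤ n → Q j ≤ 1 := by
    intro j hj
    exact Finset.prod_le_one (fun i hi => hfnn i (le_trans (Finset.mem_range.1 hi).le hj))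
      (fun i _ => hfle i)
  -- step 1: each term is j * (Q (j-1) - Q j)
  have hterm : ∀ j ∈ Finset.Icc 1 n, (j : ℝ) *
      (((j : ℝ) / ((n : ℝ) + 1)) * ∏ i ∈ Finset.range (j - 1), ((n : ℝ) - (i : ℝ)) / ((n : ℝ) + 1))
      = (j : ℝ) * (Q (j - 1) - Q j) := by
    intro j hj
    rw [Finset.mem_Icc] at hj
    have hj1 : 1 ≤ j := hj.1
    have hcast : ((j - 1 : ℕ) : ℝ) = (j : ℝ) - 1 := by
      push_cast [hj1]; ring
    have hfval : f (j - 1) = ((n : ℝ) - ((j : ℝ) - 1)) / ((n : ℝ) + 1) := by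
      show ((n : ℝ) - ((j - 1 : ℕ) : ℝ)) / ((n : ℝ) + 1) = _
      rw [hcast]
    have hQj : Q j = Q (j - 1) * (((n : ℝ) - ((j : ℝ) - 1)) / ((n : ℝ) + 1)) := by
      have h := Finset.prod_range_succ f (j - 1)
      rw [show (j - 1) + 1 = j by omega] at h
      rw [← hfval]
      exact h
    have hL : (j : ℝ) * (((j : ℝ) / ((n : ℝ) + 1)) *
        ∏ i ∈ Finset.range (j - 1), ((n : ℝ) - (i : ℝ)) / ((n : ℝ) + 1))
        = (j : ℝ) * (((j : ℝ) / ((n : ℝ) + 1)) * Q (j - 1)) := rfl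
    rw [hL, hQj]
    generalize Q (j - 1) = q
    have hinner : q - q * (((n : ℝ) - ((j : ℝ) - 1)) / ((n : ℝ) + 1))
        = q * ((j : ℝ) / ((n : ℝ) + 1)) := by
      field_simp
      ring
    rw [hinner]
    ring
  rw [Finset.sum_congr rfl hterm, abel_sum_aux Q n]
  -- step 2: drop the -n * Q n term
  have h1 : (∑ k ∈ Finset.range n, Q k) - (n : ℝ) * Q n ≤ ∑ k ∈ Finset.range n, Q k := by
    have := hQnn n le_rfl
    nlinarith [Nat.cast_nonneg (α := ℝ) n]
  refine le_trans h1 ?_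
  -- step 3: bound the sum of Q
  set r : ℝ := ((n : ℝ) - (K : ℝ)) / ((n : ℝ) + 1) with hrdef
  have hr0 : 0 ≤ r := hfnn K hKn
  have hKcast : (K : ℝ) ≤ (n : ℝ) := by exact_mod_cast hKn
  have hr1 : r < 1 := by
    rw [hrdef, div_lt_one hn1]
    have : (0:ℝ) ≤ (K : ℝ) := Nat.cast_nonneg K
    linarith
  have hQr : ∀ k : ℕ, K < k → k ≤ n → Q k ≤ r ^ (k - K) := by
    intro k hKk hkn
    have hsplit : Q k = (∏ i ∈ Finset.range K, f i) * ∏ i ∈ Finset.Ico K k, f i :=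
      (Finset.prod_range_mul_prod_Ico f hKk.le).symm
    have h2nn : 0 ≤ ∏ i ∈ Finset.Ico K k, f i :=
      Finset.prod_nonneg fun i hi => hfnn i (le_trans (Finset.mem_Ico.1 hi).2.le hkn)
    have hb : (∏ i ∈ Finset.Ico K k, f i) ≤ r ^ (k - K) := by
      have : (∏ i ∈ Finset.Ico K k, f i) ≤ ∏ i ∈ Finset.Ico K k, r := by
        apply Finset.prod_le_prod
        · intro i hi; exact hfnn i (le_trans (Finset.mem_Ico.1 hi).2.le hkn)
        · intro i hi
          have hiK : (K : ℝ) ≤ (i : ℝ) := by exact_mod_cast (Finset.mem_Ico.1 hi).1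
          show ((n : ℝ) - (i : ℝ)) / ((n : ℝ) + 1) ≤ ((n : ℝ) - (K : ℝ)) / ((n : ℝ) + 1)
          gcongr
      rwa [Finset.prod_const, Nat.card_Ico] at this
    calc Q k = (∏ i ∈ Finset.range K, f i) * ∏ i ∈ Finset.Ico K k, f i := hsplit
      _ ≤ 1 * r ^ (k - K) := by
          apply mul_le_mul _ hb h2nn zero_le_one
          exact Finset.prod_le_one (fun i hi => hfnn i (le_trans (Finset.mem_range.1 hi).le hKn))
            (fun i _ => hfle i)
      _ = r ^ (k - K) := one_mul _
  -- split the sum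
  rw [← Finset.sum_filter_add_sum_filter_not (Finset.range n) (· ≤ K)]
  have hA : ∑ k ∈ Finset.filter (· ≤ K) (Finset.range n), Q k ≤ (K : ℝ) + 1 := by
    calc ∑ k ∈ Finset.filter (· ≤ K) (Finset.range n), Q k
        ≤ ∑ k ∈ Finset.filter (· ≤ K) (Finset.range n), 1 := by
          apply Finset.sum_le_sum
          intro k hk
          exact hQ1 k ((Finset.mem_range.1 (Finset.mem_filter.1 hk).1).le.trans (le_refl n))
      _ = ((Finset.filter (· ≤ K) (Finset.range n)).card : ℝ) := by
          rw [Finset.sum_const]; simp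
      _ ≤ (K : ℝ) + 1 := by
          have hsub : Finset.filter (· ≤ K) (Finset.range n) ⊆ Finset.range (K + 1) := by
            intro k hk
            exact Finset.mem_range.2 (Nat.lt_succ_of_le (Finset.mem_filter.1 hk).2)
          have := Finset.card_le_card hsub
          rw [Finset.card_range] at this
          exact_mod_cast this
  have hB : ∑ k ∈ Finset.filter (fun k => ¬ k ≤ K) (Finset.range n), Q k ≤ 1 / (1 - r) := by
    have hsub : Finset.filter (fun k => ¬ k ≤ K) (Finset.range n) ⊆ Finset.Ico (K + 1) n := by
      intro k hk
      rw [Finset.mem_filter, Finset.mem_range] at hk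
      exact Finset.mem_Ico.2 ⟨by omega, hk.1⟩
    calc ∑ k ∈ Finset.filter (fun k => ¬ k ≤ K) (Finset.range n), Q k
        ≤ ∑ k ∈ Finset.Ico (K + 1) n, Q k := by
          apply Finset.sum_le_sum_of_subset_of_nonneg hsub
          intro k hk _
          exact hQnn k (Finset.mem_Ico.1 hk).2.le
      _ ≤ ∑ k ∈ Finset.Ico (K + 1) n, r ^ (k - K) := by
          apply Finset.sum_le_sum
          intro k hk
          rw [Finset.mem_Ico] at hk
          exact hQr k (by omega) hk.2.le
      _ = ∑ i ∈ Finset.range (n - (K + 1)), r ^ (i + 1) := by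
          rw [Finset.sum_Ico_eq_sum_range]
          apply Finset.sum_congr rfl
          intro i _
          congr 1
          omega
      _ ≤ 1 / (1 - r) := by
          have h1r : 0 < 1 - r := by linarith
          have hgeom : ∑ i ∈ Finset.range (n - (K + 1)), r ^ (i + 1)
              ≤ ∑ i ∈ Finset.range (n - (K + 1) + 1), r ^ i := by
            rw [Finset.sum_range_succ']
            simp only [pow_zero]
            have : (0:ℝ) ≤ 1 := zero_le_one
            nlinarith [Finset.sum_nonneg (fun i (_ : i ∈ Finset.range (n - (K+1))) =>
              pow_nonneg hr0 (i+1))]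
          refine hgeom.trans ?_
          rw [le_div_iff₀ h1r]
          have hgs := geom_sum_mul r (n - (K + 1) + 1)
          have hpn : 0 ≤ r ^ (n - (K + 1) + 1) := pow_nonneg hr0 _
          nlinarith
  -- step 4: arithmetic
  have hsqn : (1:ℝ) ≤ Real.sqrt n := by
    rw [show (1:ℝ) = Real.sqrt 1 by simp]
    exact Real.sqrt_le_sqrt (by exact_mod_cast hn)
  have hKle : (K : ℝ) ≤ Real.sqrt n := by
    have h1 : (K : ℝ) ^ 2 ≤ (n : ℝ) := by
      have h0 : K ^ 2 ≤ n := Nat.sqrt_le' n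
      have h2 : ((K ^ 2 : ℕ) : ℝ) ≤ (n : ℝ) := by exact_mod_cast h0
      push_cast at h2
      nlinarith
    calc (K : ℝ) = Real.sqrt ((K:ℝ)^2) := by rw [Real.sqrt_sq (Nat.cast_nonneg K)]
      _ ≤ Real.sqrt n := Real.sqrt_le_sqrt h1
  have hKgt : Real.sqrt n ≤ (K : ℝ) + 1 := by
    have h1 : (n : ℝ) ≤ ((K : ℝ) + 1) ^ 2 := by
      have h2 : n < (K + 1) ^ 2 := by simpa using Nat.lt_succ_sqrt' n
      have h3 : (n : ℝ) < (((K + 1) ^ 2 : ℕ) : ℝ) := by exact_mod_cast h2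
      push_cast at h3
      nlinarith
    calc Real.sqrt n ≤ Real.sqrt (((K:ℝ)+1)^2) := Real.sqrt_le_sqrt h1
      _ = (K : ℝ) + 1 := Real.sqrt_sq (by positivity)
  have hAb : (K : ℝ) + 1 ≤ 2 * Real.sqrt n := by linarith
  have h1r : 1 - r = ((K : ℝ) + 1) / ((n : ℝ) + 1) := by
    rw [hrdef]
    field_simp
    ring
  have hBb : 1 / (1 - r) ≤ 2 * Real.sqrt n := by
    rw [h1r, one_div_div]
    rw [div_le_iff₀ (by positivity : (0:ℝ) < (K:ℝ)+1)]
    have hsq : Real.sqrt n * Real.sqrt n = (n : ℝ) := Real.mul_self_sqrt (Nat.cast_nonneg n)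
    nlinarith
  linarith
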